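/- Let C > 0 and X_1, …, X_n be independent random variables with X_i ∈ [0,C] a.s., and let μ = E[Σ_i X_i]. If μ ≤ C, then E[min(Σ_i X_i, C)] ≥ (1 - 1/e)·μ. -/

import Mathlib

open MeasureTheory ProbabilityTheory

lemma my_iIndepFun_ae_eq {Ω ι : Type*} [MeasurableSpace Ω] {μ : Measure Ω}
    {f g : ι → Ω → ℝ} (hf : iIndepFun f μ)
    (h : ∀ i, f i =ᵐ[μ] g i) : iIndepFun g μ := by
  rw [iIndepFun_iff_measure_inter_preimage_eq_mul] at hf ⊢
  intro S sets hsets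
  have hall : ∀ᵐ ω ∂μ, ∀ i ∈ S, f i ω = g i ω :=
    (Filter.eventually_all_finset S).2 (fun i _ => h i)
  have hpre : ∀ i ∈ S, μ (g i ⁻¹' sets i) = μ (f i ⁻¹' sets i) := by
    intro i hi
    refine measure_congr ?_
    filter_upwards [h i] with ω hω
    show (g i ω ∈ sets i) = (f i ω ∈ sets i)
    rw [hω]
  have hint : (⋂ i ∈ S, g i ⁻¹' sets i : Set Ω) =ᵐ[μ] (⋂ i ∈ S, f i ⁻¹' sets i) := by
    filter_upwards [hall] with ω hω
    show (ω ∈ ⋂ i ∈ S, g i ⁻¹' sets i) = (ω ∈ ⋂ i ∈ S, f i ⁻¹' sets i)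
    simp only [Set.mem_iInter, Set.mem_preimage, eq_iff_iff]
    constructor
    · intro H i hi; rw [hω i hi]; exact H i hi
    · intro H i hi; rw [← hω i hi]; exact H i hi
  rw [measure_congr hint, hf S hsets]
  exact Finset.prod_congr rfl (fun i hi => (hpre i hi).symm)

lemma my_weierstrass {ι : Type*} (s : Finset ι) (x : ι → ℝ)
    (h0 : ∀ i ∈ s, 0 ≤ x i) (h1 : ∀ i ∈ s, x i ≤ 1) :
    1 - ∑ i ∈ s, x i ≤ ∏ i ∈ s, (1 - x i) := by
  classical
  induction s using Finset.induction_on with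
  | empty => simp
  | @insert a s ha ih =>
    rw [Finset.sum_insert ha, Finset.prod_insert ha]
    have ha0 : 0 ≤ x a := h0 a (Finset.mem_insert_self a s)
    have ha1 : x a ≤ 1 := h1 a (Finset.mem_insert_self a s)
    have hs0 : 0 ≤ ∑ i ∈ s, x i :=
      Finset.sum_nonneg (fun i hi => h0 i (Finset.mem_insert_of_mem hi))
    have ihs : 1 - ∑ i ∈ s, x i ≤ ∏ i ∈ s, (1 - x i) :=
      ih (fun i hi => h0 i (Finset.mem_insert_of_mem hi))
         (fun i hi => h1 i (Finset.mem_insert_of_mem hi))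
    nlinarith [mul_le_mul_of_nonneg_left ihs (by linarith : (0:ℝ) ≤ 1 - x a)]

lemma my_integral_finset_prod {Ω : Type*} [MeasurableSpace Ω] (μ : Measure Ω)
    [IsProbabilityMeasure μ] {ι : Type*} (Y : ι → Ω → ℝ)
    (hindep : iIndepFun Y μ) (hm : ∀ i, Measurable (Y i))
    (s : Finset ι) :
    ∫ ω, ∏ i ∈ s, Y i ω ∂μ = ∏ i ∈ s, ∫ ω, Y i ω ∂μ := by
  classical
  induction s using Finset.induction_on with
  | empty => simp
  | @insert a s ha ih =>
    have hPeq : (∏ i ∈ s, Y i) = fun ω => ∏ i ∈ s, Y i ω :=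
      funext fun ω => Finset.prod_apply ω s Y
    have hip : IndepFun (Y a) (fun ω => ∏ i ∈ s, Y i ω) μ := by
      have := (hindep.indepFun_finsetProd_of_notMem hm ha).symm
      rwa [hPeq] at this
    have hpm : Measurable (fun ω => ∏ i ∈ s, Y i ω) :=
      Finset.measurable_prod s (fun i _ => hm i)
    have key : ∫ ω, Y a ω * ∏ i ∈ s, Y i ω ∂μ
        = (∫ ω, Y a ω ∂μ) * ∫ ω, ∏ i ∈ s, Y i ω ∂μ :=
      hip.integral_fun_mul_eq_mul_integral (hm a).aestronglyMeasurable hpm.aestronglyMeasurable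
    simp only [Finset.prod_insert ha]
    rw [key, ih]

lemma my_convex_exp (t : ℝ) (h0 : 0 ≤ t) (h1 : t ≤ 1) :
    (1 - 1 / Real.exp 1) * t ≤ 1 - Real.exp (-t) := by
  have h := convexOn_exp.2 (Set.mem_univ (0:ℝ)) (Set.mem_univ (-1:ℝ))
    (by linarith : (0:ℝ) ≤ 1 - t) h0 (by ring)
  simp only [smul_eq_mul, mul_zero, mul_neg, mul_one, zero_add, Real.exp_zero] at h
  have h2 : Real.exp (-1) = (Real.exp 1)⁻¹ := Real.exp_neg 1
  rw [h2] at h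
  have he : 0 < Real.exp 1 := Real.exp_pos 1
  rw [one_div]
  nlinarith [h]

theorem stmt_4 {Ω : Type*} [MeasurableSpace Ω] (μ : Measure Ω) [IsProbabilityMeasure μ]
    (C : ℝ) (hC : 0 < C) (n : ℕ) (X : Fin n → Ω → ℝ)
    (hindep : iIndepFun X μ)
    (h0 : ∀ i, ∀ᵐ ω ∂μ, 0 ≤ X i ω) (hCle : ∀ i, ∀ᵐ ω ∂μ, X i ω ≤ C)
    (hint : ∀ i, Integrable (X i) μ)
    (hμC : (∫ ω, ∑ i, X i ω ∂μ) ≤ C) :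
    (∫ ω, min (∑ i, X i ω) C ∂μ) ≥
      (1 - 1 / Real.exp 1) * (∫ ω, ∑ i, X i ω ∂μ) := by
  classical
  set X' : Fin n → Ω → ℝ := fun i => (hint i).1.mk (X i) with hX'def
  have hX'm : ∀ i, Measurable (X' i) := fun i => (hint i).1.stronglyMeasurable_mk.measurable
  have hae : ∀ i, X i =ᵐ[μ] X' i := fun i => (hint i).1.ae_eq_mk
  have hindep' : iIndepFun X' μ := my_iIndepFun_ae_eq hindep hae
  set Y : Fin n → Ω → ℝ := fun i ω => 1 - X' i ω / C with hYdef
  have hYm : ∀ i, Measurable (Y i) := fun i => measurable_const.sub ((hX'm i).div_const C)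
  have hYindep : iIndepFun Y μ := by
    have hgm : Measurable (fun x : ℝ => 1 - x / C) :=
      measurable_const.sub (measurable_id.div_const C)
    exact hindep'.comp (fun _ => fun x : ℝ => 1 - x / C) (fun _ => hgm)
  set m : Fin n → ℝ := fun i => ∫ ω, X i ω ∂μ with hmdef
  have hm0 : ∀ i, 0 ≤ m i := fun i => integral_nonneg_of_ae (h0 i)
  have hmC : ∀ i, m i ≤ C := by
    intro i
    have := integral_mono_ae (hint i) (integrable_const C) (hCle i)
    simpa using this
  have hintY : ∀ i, Integrable (Y i) μ := fun i =>
    (integrable_const 1).sub (((hint i).congr (hae i)).div_const C)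
  have hEY : ∀ i, ∫ ω, Y i ω ∂μ = 1 - m i / C := by
    intro i
    rw [hYdef]
    rw [integral_sub (integrable_const 1) (((hint i).congr (hae i)).div_const C)]
    rw [integral_div, integral_congr_ae (hae i).symm]
    simp [hmdef]
  set T : ℝ := ∫ ω, ∑ i, X i ω ∂μ with hTdef
  have hT : T = ∑ i, m i := by
    rw [hTdef, integral_finset_sum _ (fun i _ => hint i)]
  have hT0 : 0 ≤ T := hT ▸ Finset.sum_nonneg fun i _ => hm0 i
  have haeAll : ∀ᵐ ω ∂μ, ∀ i, (0 ≤ X i ω ∧ X i ω ≤ C) ∧ X i ω = X' i ω := by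
    rw [ae_all_iff]
    intro i
    filter_upwards [h0 i, hCle i, hae i] with ω a b c
    exact ⟨⟨a, b⟩, c⟩
  have hptwise : ∀ᵐ ω ∂μ, C * (1 - ∏ i, Y i ω) ≤ min (∑ i, X i ω) C := by
    filter_upwards [haeAll] with ω hω
    have hprod_eq : ∏ i, Y i ω = ∏ i, (1 - X i ω / C) :=
      Finset.prod_congr rfl fun i _ => by rw [hYdef]; rw [(hω i).2]
    have hx0 : ∀ i ∈ Finset.univ, 0 ≤ X i ω / C := fun i _ => div_nonneg (hω i).1.1 hC.le
    have hx1 : ∀ i ∈ Finset.univ, X i ω / C ≤ 1 := fun i _ => (div_le_one hC).2 (hω i).1.2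
    have hw := my_weierstrass Finset.univ (fun i => X i ω / C) hx0 hx1
    have hP0 : (0:ℝ) ≤ ∏ i, (1 - X i ω / C) :=
      Finset.prod_nonneg fun i hi => by linarith [hx1 i hi]
    refine le_min ?_ ?_
    · have hsum : ∑ i, (X i ω / C) = (∑ i, X i ω) / C := (Finset.sum_div _ _ _).symm
      rw [hprod_eq]
      have h1 : 1 - ∏ i, (1 - X i ω / C) ≤ (∑ i, X i ω) / C := by
        rw [← hsum]; linarith [hw]
      have := mul_le_mul_of_nonneg_left h1 hC.le
      calc C * (1 - ∏ i, (1 - X i ω / C)) ≤ C * ((∑ i, X i ω) / C) := this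
        _ = ∑ i, X i ω := by field_simp
    · rw [hprod_eq]; nlinarith [hP0, hC]
  have hPm : Measurable (fun ω => ∏ i, Y i ω) := Finset.measurable_prod _ fun i _ => hYm i
  have hPbd : ∀ᵐ ω ∂μ, ‖∏ i, Y i ω‖ ≤ 1 := by
    filter_upwards [haeAll] with ω hω
    have h1 : ∀ i ∈ Finset.univ, (0:ℝ) ≤ Y i ω := by
      intro i _
      show (0:ℝ) ≤ 1 - X' i ω / C
      rw [← (hω i).2]
      have : X i ω / C ≤ 1 := (div_le_one hC).2 (hω i).1.2
      linarith
    have h2 : ∀ i ∈ Finset.univ, Y i ω ≤ 1 := by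
      intro i _
      show 1 - X' i ω / C ≤ 1
      rw [← (hω i).2]
      have : 0 ≤ X i ω / C := div_nonneg (hω i).1.1 hC.le
      linarith
    have hp0 : (0:ℝ) ≤ ∏ i, Y i ω := Finset.prod_nonneg h1
    have hp1 : ∏ i, Y i ω ≤ 1 := Finset.prod_le_one h1 h2
    rw [Real.norm_eq_abs, abs_of_nonneg hp0]
    exact hp1
  have hPint : Integrable (fun ω => ∏ i, Y i ω) μ :=
    (integrable_const (1:ℝ)).mono' hPm.aestronglyMeasurable hPbd
  have hLHSint : Integrable (fun ω => C * (1 - ∏ i, Y i ω)) μ :=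
    ((integrable_const (1:ℝ)).sub hPint).const_mul C
  have hSint : Integrable (fun ω => ∑ i, X i ω) μ :=
    integrable_finset_sum _ fun i _ => hint i
  have hmin_int : Integrable (fun ω => min (∑ i, X i ω) C) μ := by
    refine (hSint.abs.add (integrable_const C)).mono'
      ((hSint.aemeasurable.min aemeasurable_const).aestronglyMeasurable) ?_
    refine Filter.Eventually.of_forall fun ω => ?_
    simp only [Pi.add_apply]
    rw [Real.norm_eq_abs]
    rcases le_total (∑ i, X i ω) C with h | h
    · rw [min_eq_left h]
      have : |∑ i, X i ω| ≤ |∑ i, X i ω| + C := by linarith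
      exact this
    · rw [min_eq_right h, abs_of_pos hC]
      have : 0 ≤ |∑ i, X i ω| := abs_nonneg _
      linarith
  have step1 : ∫ ω, C * (1 - ∏ i, Y i ω) ∂μ ≤ ∫ ω, min (∑ i, X i ω) C ∂μ :=
    integral_mono_ae hLHSint hmin_int hptwise
  have step2 : ∫ ω, C * (1 - ∏ i, Y i ω) ∂μ = C * (1 - ∏ i, (1 - m i / C)) := by
    rw [integral_const_mul, integral_sub (integrable_const 1) hPint,
      my_integral_finset_prod μ Y hYindep hYm Finset.univ]
    simp [hEY]
  have step3 : ∏ i, (1 - m i / C) ≤ Real.exp (-(T / C)) := by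
    calc ∏ i, (1 - m i / C) ≤ ∏ i, Real.exp (-(m i / C)) := by
          refine Finset.prod_le_prod (fun i _ => ?_) (fun i _ => ?_)
          · have := (div_le_one hC).2 (hmC i); linarith
          · linarith [Real.add_one_le_exp (-(m i / C))]
      _ = Real.exp (∑ i, -(m i / C)) := (Real.exp_sum _ _).symm
      _ = Real.exp (-(T / C)) := by
          congr 1
          rw [hT, Finset.sum_neg_distrib, Finset.sum_div]
  have ht1 : T / C ≤ 1 := (div_le_one hC).2 hμC
  have step4 : (1 - 1 / Real.exp 1) * T ≤ C * (1 - Real.exp (-(T / C))) := by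
    have h := my_convex_exp (T / C) (div_nonneg hT0 hC.le) ht1
    have h2 := mul_le_mul_of_nonneg_left h hC.le
    calc (1 - 1 / Real.exp 1) * T = C * ((1 - 1 / Real.exp 1) * (T / C)) := by
          field_simp
      _ ≤ C * (1 - Real.exp (-(T / C))) := h2
  have step5 : C * (1 - Real.exp (-(T / C))) ≤ C * (1 - ∏ i, (1 - m i / C)) := by
    have : 1 - Real.exp (-(T / C)) ≤ 1 - ∏ i, (1 - m i / C) := by linarith [step3]
    exact mul_le_mul_of_nonneg_left this hC.le
  calc (1 - 1 / Real.exp 1) * T ≤ C * (1 - Real.exp (-(T / C))) := step4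
    _ ≤ C * (1 - ∏ i, (1 - m i / C)) := step5
    _ = ∫ ω, C * (1 - ∏ i, Y i ω) ∂μ := step2.symm
    _ ≤ ∫ ω, min (∑ i, X i ω) C ∂μ := step1
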